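/- Let n ≥ 2, let m ≥ 2 divide n with m even if n is even, and let B = ∏ B_d over divisors d of n not dividing m, as in the factorization A_n = A_m · B. Suppose B ∈ ℤ[c] is monic of even degree with B(0) = B(-1) = B(-2) = 1. Then for every c ∈ ℚ, B(c) is a nonzero square in ℚ₃ (the 3-adic numbers). -/

import Mathlib

open Polynomial

/-- Any 3-adic integer congruent to 1 mod the maximal ideal is a nonzero square. -/
lemma unit_sq_aux (u : ℤ_[3]) (h : ‖u - 1‖ < 1) : u ≠ 0 ∧ IsSquare u := by
  have h2 : ‖((X : Polynomial ℤ_[3]) ^ 2 - C u).eval 1‖ <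
      ‖(Polynomial.derivative ((X : Polynomial ℤ_[3]) ^ 2 - C u)).eval 1‖ ^ 2 := by
    have hder : (Polynomial.derivative ((X : Polynomial ℤ_[3]) ^ 2 - C u)).eval 1 = 2 := by
      simp [derivative_sub, derivative_pow]
    have h2norm : ‖(2 : ℤ_[3])‖ = 1 := by
      have hle : ‖((2 : ℤ) : ℤ_[3])‖ ≤ 1 := PadicInt.norm_le_one _
      have hlt : ¬ ‖((2 : ℤ) : ℤ_[3])‖ < 1 := by
        rw [PadicInt.norm_int_lt_one_iff_dvd]
        decide
      push_cast at hle hlt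
      exact le_antisymm hle (not_lt.mp hlt)
    rw [hder, h2norm, one_pow]
    simpa [norm_sub_rev] using h
  obtain ⟨z, hz, -⟩ := hensels_lemma h2
  have hzz : u = z * z := by
    have h' : z ^ 2 - u = 0 := by simpa using hz
    rw [← sub_eq_zero.mp h', sq]
  constructor
  · intro h0
    rw [h0] at h
    simp at h
  · exact ⟨z, hzz⟩

theorem stmt_18 (B : Polynomial ℤ)
    (hmonic : B.Monic) (hdeg : Even B.natDegree)
    (h0 : B.eval 0 = 1) (h1 : B.eval (-1) = 1) (h2 : B.eval (-2) = 1) :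
    ∀ c : ℚ, aeval ((c : ℚ_[3])) B ≠ 0 ∧ IsSquare (aeval ((c : ℚ_[3])) B) := by
  intro c
  set x : ℚ_[3] := (c : ℚ_[3]) with hx
  by_cases hle : ‖x‖ ≤ 1
  · -- integral case
    set z : ℤ_[3] := ⟨x, hle⟩ with hzdef
    have hcast : aeval x B = ((aeval z B : ℤ_[3]) : ℚ_[3]) := by
      exact Polynomial.aeval_algHom_apply (PadicInt.Coe.ringHom (p := 3)).toIntAlgHom z B
    -- find residue
    have hres : ∃ r : ℤ, B.eval r = 1 ∧ PadicInt.toZMod ((r : ℤ_[3])) = PadicInt.toZMod z := by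
      have h3 : ∀ m : ZMod 3, m = ((0 : ℤ) : ZMod 3) ∨ m = ((-1 : ℤ) : ZMod 3) ∨
          m = ((-2 : ℤ) : ZMod 3) := by decide
      rcases h3 (PadicInt.toZMod z) with h | h | h
      · exact ⟨0, h0, by rw [map_intCast, h]⟩
      · exact ⟨-1, h1, by rw [map_intCast, h]⟩
      · exact ⟨-2, h2, by rw [map_intCast, h]⟩
    obtain ⟨r, hr1, hr2⟩ := hres
    have hdvd3 : (3 : ℤ_[3]) ∣ z - (r : ℤ_[3]) := by
      have hker : z - (r : ℤ_[3]) ∈ RingHom.ker (PadicInt.toZMod (p := 3)) := by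
        rw [RingHom.mem_ker, map_sub, hr2, sub_self]
      rw [PadicInt.ker_toZMod, PadicInt.maximalIdeal_eq_span_p,
        Ideal.mem_span_singleton] at hker
      exact hker
    have hdvd : (3 : ℤ_[3]) ∣ aeval z B - 1 := by
      have h1' : aeval z B = (B.map (Int.castRingHom ℤ_[3])).eval z := by
        rw [aeval_def, eval_map]; rfl
      have h2' : (B.map (Int.castRingHom ℤ_[3])).eval ((r : ℤ_[3])) = 1 := by
        rw [Polynomial.eval_intCast_map]
        simp [hr1]
      have := Polynomial.sub_dvd_eval_sub z ((r : ℤ_[3])) (B.map (Int.castRingHom ℤ_[3]))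
      rw [h2'] at this
      rw [h1']
      exact dvd_trans hdvd3 this
    have hnorm : ‖aeval z B - 1‖ < 1 := by
      rw [PadicInt.norm_lt_one_iff_dvd]
      exact_mod_cast hdvd
    obtain ⟨hne, s, hs⟩ := unit_sq_aux (aeval z B) hnorm
    refine ⟨?_, ?_⟩
    · rw [hcast]
      exact PadicInt.coe_ne_zero.mpr hne
    · rw [hcast, hs]
      exact ⟨(s : ℚ_[3]), by push_cast; ring⟩
  · -- non-integral case
    push_neg at hle
    have hx0 : x ≠ 0 := by
      intro h; rw [h] at hle; norm_num at hle
    set y : ℚ_[3] := x⁻¹ with hy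
    have hyn : ‖y‖ < 1 := by
      rw [hy, norm_inv]
      rw [inv_lt_one_iff₀]
      right; exact hle
    set n : ℕ := B.natDegree with hn
    set z : ℤ_[3] := ⟨y, le_of_lt hyn⟩ with hzdef
    set w : ℤ_[3] := ∑ i ∈ Finset.range n, ((B.coeff i : ℤ_[3]) * z ^ (n - 1 - i)) with hw
    set u : ℤ_[3] := 1 + z * w with hu
    have hun : ‖u - 1‖ < 1 := by
      have : u - 1 = z * w := by rw [hu]; ring
      rw [this, norm_mul]
      calc ‖z‖ * ‖w‖ ≤ ‖z‖ * 1 := by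
            exact mul_le_mul_of_nonneg_left (PadicInt.norm_le_one w) (norm_nonneg z)
        _ = ‖z‖ := mul_one _
        _ < 1 := hyn
    obtain ⟨hune, s, hs⟩ := unit_sq_aux u hun
    -- key identity
    have hP : aeval x B = x ^ n * (u : ℚ_[3]) := by
      have hmap : aeval x B = (B.map (Int.castRingHom ℚ_[3])).eval x := by
        rw [aeval_def, eval_map]; rfl
      have hdegmap : (B.map (Int.castRingHom ℚ_[3])).natDegree = n :=
        hmonic.natDegree_map _
      have hlead : (B.map (Int.castRingHom ℚ_[3])).coeff n = 1 := by
        rw [coeff_map]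
        have : B.coeff n = 1 := hmonic
        rw [this]; simp
      have hsum : (B.map (Int.castRingHom ℚ_[3])).eval x =
          ∑ i ∈ Finset.range (n + 1), (B.map (Int.castRingHom ℚ_[3])).coeff i * x ^ i :=
        eval_eq_sum_range' (by omega) x
      rw [hmap, hsum, Finset.sum_range_succ, hlead, one_mul]
      have hcoeff : ∀ i, (B.map (Int.castRingHom ℚ_[3])).coeff i = (B.coeff i : ℚ_[3]) := by
        intro i; rw [coeff_map]; rfl
      have hws : ((w : ℤ_[3]) : ℚ_[3]) = ∑ i ∈ Finset.range n, (B.coeff i : ℚ_[3]) * y ^ (n - 1 - i) := by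
        rw [hw]
        rw [show ∀ v : ℤ_[3], ((v : ℚ_[3])) = PadicInt.Coe.ringHom v from fun _ => rfl]
        rw [map_sum]
        apply Finset.sum_congr rfl
        intro i _
        rw [map_mul, map_pow, map_intCast]
        rfl
      have hucast : (u : ℚ_[3]) = 1 + y * ∑ i ∈ Finset.range n, (B.coeff i : ℚ_[3]) * y ^ (n - 1 - i) := by
        rw [hu]
        push_cast
        rw [hws]
      rw [hucast, mul_add, mul_one, Finset.mul_sum, add_comm]
      congr 1
      rw [Finset.mul_sum]
      apply Finset.sum_congr rfl
      intro i hi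
      rw [Finset.mem_range] at hi
      rw [hcoeff]
      have hexp : x ^ n * (y * ((B.coeff i : ℚ_[3]) * y ^ (n - 1 - i)))
          = (B.coeff i : ℚ_[3]) * (x ^ n * y ^ (n - i)) := by
        have : (n : ℕ) - i = (n - 1 - i) + 1 := by omega
        rw [this, pow_succ]
        ring
      rw [hexp]
      congr 1
      have hxn : x ^ n = x ^ i * x ^ (n - i) := by
        rw [← pow_add]
        congr 1
        omega
      rw [hxn, hy, inv_pow, mul_assoc, mul_inv_cancel₀ (pow_ne_zero _ hx0), mul_one]
    obtain ⟨k, hk⟩ := hdeg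
    refine ⟨?_, ?_⟩
    · rw [hP]
      apply mul_ne_zero (pow_ne_zero _ hx0)
      exact PadicInt.coe_ne_zero.mpr hune
    · rw [hP, hs]
      refine ⟨x ^ k * (s : ℚ_[3]), ?_⟩
      rw [hk]
      push_cast
      ring
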